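/- Let a, b ∈ Δₙ be probability vectors, C ∈ ℝ₊^{n×n}, γ > 0, K := exp(−C/γ). Let B = diag(u) K diag(v) with u, v ∈ ℝ_{++}ⁿ (B is not required to be a probability matrix), and set E := ‖B𝟏ₙ − a‖₁ + ‖Bᵀ𝟏ₙ − b‖₁. Then every matrix B̂ ∈ Π(a,b) satisfying ‖B − B̂‖₁ ≤ 2E satisfies ⟨C, B̂⟩ ≤ min_{P ∈ Π(a,b)} ⟨C, P⟩ + (2 + E)γ log n + 4E‖C‖_∞. -/

import Mathlib

open Finset

private lemma plog {p b : ℝ} (hp : 0 ≤ p) (hb : 0 < b) :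
    p * (Real.log b - Real.log p) ≤ b - p := by
  rcases hp.lt_or_eq with h | h
  · have hdiv : 0 < b / p := div_pos hb h
    have h1 := Real.log_le_sub_one_of_pos hdiv
    rw [Real.log_div hb.ne' h.ne'] at h1
    have h2 := mul_le_mul_of_nonneg_left h1 h.le
    calc p * (Real.log b - Real.log p) ≤ p * (b / p - 1) := h2
      _ = b - p := by field_simp
  · rw [← h]; simpa using hb.le

private lemma entropic_bound {n : ℕ} (hn : 0 < n) (C : Matrix (Fin n) (Fin n) ℝ)
    (γ : ℝ) (hγ : 0 < γ)
    (u v : Fin n → ℝ) (hu : ∀ i, 0 < u i) (hv : ∀ j, 0 < v j)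
    (B : Matrix (Fin n) (Fin n) ℝ)
    (hB : ∀ i j, B i j = u i * Real.exp (-C i j / γ) * v j)
    (Q : Matrix (Fin n) (Fin n) ℝ) (hQ0 : ∀ i j, 0 ≤ Q i j)
    (hQr : ∀ i, ∑ j, Q i j = ∑ j, B i j) (hQc : ∀ j, ∑ i, Q i j = ∑ i, B i j) :
    ∑ i, ∑ j, C i j * B i j ≤ (∑ i, ∑ j, C i j * Q i j) +
      γ * (2 * (∑ i, ∑ j, B i j) * Real.log n) := by
  have hBpos : ∀ i j, 0 < B i j := fun i j => by
    rw [hB]; exact mul_pos (mul_pos (hu i) (Real.exp_pos _)) (hv j)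
  set s : ℝ := ∑ i, ∑ j, B i j with hsdef
  have huniv : (Finset.univ : Finset (Fin n)).Nonempty := ⟨⟨0, hn⟩, mem_univ _⟩
  have hs : 0 < s :=
    Finset.sum_pos (fun i _ => Finset.sum_pos (fun j _ => hBpos i j) huniv) huniv
  have hQtot : ∑ i, ∑ j, Q i j = s := Finset.sum_congr rfl fun i _ => hQr i
  -- C in terms of log B
  have hlogB : ∀ i j, Real.log (B i j) =
      Real.log (u i) + (-C i j / γ) + Real.log (v j) := by
    intro i j
    rw [hB i j, Real.log_mul (mul_pos (hu i) (Real.exp_pos _)).ne' (hv j).ne', Real.log_mul (hu i).ne'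
      (Real.exp_pos _).ne', Real.log_exp]
  have hC' : ∀ i j, C i j =
      γ * (Real.log (u i) + Real.log (v j) - Real.log (B i j)) := by
    intro i j
    rw [hlogB i j]
    field_simp
    ring
  -- marginal terms vanish
  have hmargr : ∀ i, ∑ j, (B i j - Q i j) = 0 := by
    intro i; rw [Finset.sum_sub_distrib, hQr i]; ring
  have hmargc : ∀ j, ∑ i, (B i j - Q i j) = 0 := by
    intro j; rw [Finset.sum_sub_distrib, hQc j]; ring
  have hmarg : ∑ i, ∑ j, (Real.log (u i) + Real.log (v j)) * (B i j - Q i j) = 0 := by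
    have h1 : ∀ i j, (Real.log (u i) + Real.log (v j)) * (B i j - Q i j) =
        Real.log (u i) * (B i j - Q i j) + Real.log (v j) * (B i j - Q i j) := by
      intro i j; ring
    simp_rw [h1, Finset.sum_add_distrib]
    have h2 : ∑ i, ∑ j, Real.log (u i) * (B i j - Q i j) = 0 := by
      refine Finset.sum_eq_zero fun i _ => ?_
      rw [← Finset.mul_sum, hmargr i, mul_zero]
    have h3 : ∑ i, ∑ j, Real.log (v j) * (B i j - Q i j) = 0 := by
      rw [Finset.sum_comm]
      refine Finset.sum_eq_zero fun j _ => ?_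
      rw [← Finset.mul_sum, hmargc j, mul_zero]
    rw [h2, h3, add_zero]
  -- the key identity
  have hident : (∑ i, ∑ j, C i j * B i j) - (∑ i, ∑ j, C i j * Q i j) =
      γ * ∑ i, ∑ j, Real.log (B i j) * (Q i j - B i j) := by
    have h1 : ∀ i j, C i j * B i j - C i j * Q i j =
        γ * ((Real.log (u i) + Real.log (v j)) * (B i j - Q i j)) +
        γ * (Real.log (B i j) * (Q i j - B i j)) := by
      intro i j; rw [hC' i j]; ring
    calc (∑ i, ∑ j, C i j * B i j) - (∑ i, ∑ j, C i j * Q i j)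
        = ∑ i, ∑ j, (C i j * B i j - C i j * Q i j) := by
          simp_rw [← Finset.sum_sub_distrib]
      _ = ∑ i, ∑ j, (γ * ((Real.log (u i) + Real.log (v j)) * (B i j - Q i j)) +
            γ * (Real.log (B i j) * (Q i j - B i j))) := by
          exact Finset.sum_congr rfl fun i _ => Finset.sum_congr rfl fun j _ => h1 i j
      _ = γ * (∑ i, ∑ j, (Real.log (u i) + Real.log (v j)) * (B i j - Q i j)) +
            γ * ∑ i, ∑ j, Real.log (B i j) * (Q i j - B i j) := by
          simp_rw [Finset.sum_add_distrib, ← Finset.mul_sum]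
      _ = γ * ∑ i, ∑ j, Real.log (B i j) * (Q i j - B i j) := by
          rw [hmarg, mul_zero, zero_add]
  -- Gibbs: ∑ Q log B ≤ ∑ Q log Q
  have hgibbs : ∑ i, ∑ j, Real.log (B i j) * Q i j ≤
      ∑ i, ∑ j, Real.log (Q i j) * Q i j := by
    have h1 : ∀ i j, Real.log (B i j) * Q i j - Real.log (Q i j) * Q i j ≤
        B i j - Q i j := by
      intro i j
      have := plog (hQ0 i j) (hBpos i j)
      nlinarith [this]
    have h2 : ∑ i, ∑ j, (Real.log (B i j) * Q i j - Real.log (Q i j) * Q i j) ≤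
        ∑ i, ∑ j, (B i j - Q i j) := by
      exact Finset.sum_le_sum fun i _ => Finset.sum_le_sum fun j _ => h1 i j
    have h3 : ∑ i, ∑ j, (B i j - Q i j) = 0 := by
      exact Finset.sum_eq_zero fun i _ => hmargr i
    have h4 : ∑ i, ∑ j, (Real.log (B i j) * Q i j - Real.log (Q i j) * Q i j) =
        (∑ i, ∑ j, Real.log (B i j) * Q i j) - ∑ i, ∑ j, Real.log (Q i j) * Q i j := by
      simp_rw [← Finset.sum_sub_distrib]
    rw [h4, h3] at h2
    linarith
  -- entropy of Q: ∑ Q log Q ≤ s log s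
  have hentQ : ∑ i, ∑ j, Real.log (Q i j) * Q i j ≤ s * Real.log s := by
    have hQle : ∀ i j, Q i j ≤ s := by
      intro i j
      rw [← hQtot]
      calc Q i j ≤ ∑ j, Q i j :=
            Finset.single_le_sum (fun j _ => hQ0 i j) (mem_univ j)
        _ ≤ ∑ i, ∑ j, Q i j :=
            Finset.single_le_sum (f := fun i => ∑ j, Q i j)
              (fun i _ => Finset.sum_nonneg fun j _ => hQ0 i j) (mem_univ i)
    have h1 : ∀ i j, Real.log (Q i j) * Q i j ≤ Real.log s * Q i j := by
      intro i j
      rcases (hQ0 i j).lt_or_eq with h | h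
      · exact mul_le_mul_of_nonneg_right (Real.log_le_log h (hQle i j)) (hQ0 i j)
      · rw [← h]; simp
    calc ∑ i, ∑ j, Real.log (Q i j) * Q i j ≤ ∑ i, ∑ j, Real.log s * Q i j :=
          Finset.sum_le_sum fun i _ => Finset.sum_le_sum fun j _ => h1 i j
      _ = s * Real.log s := by
          simp_rw [← Finset.mul_sum]
          rw [hQtot, mul_comm]
  -- entropy of B: s log s ≤ ∑ B log B + 2 s log n
  have hentB : s * Real.log s ≤
      (∑ i, ∑ j, Real.log (B i j) * B i j) + 2 * s * Real.log n := by
    have hn2 : (0:ℝ) < s / (n:ℝ)^2 := by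
      have h : (0:ℝ) < (n:ℝ)^2 := by
        have : (0:ℝ) < (n:ℝ) := Nat.cast_pos.2 hn
        positivity
      exact div_pos hs h
    have h1 : ∀ i j, B i j * (Real.log (s / (n:ℝ)^2) - Real.log (B i j)) ≤
        s / (n:ℝ)^2 - B i j := fun i j => plog (hBpos i j).le hn2
    have h2 : ∑ i, ∑ j, (B i j * (Real.log (s / (n:ℝ)^2) - Real.log (B i j))) ≤
        ∑ i, ∑ j, (s / (n:ℝ)^2 - B i j) :=
      Finset.sum_le_sum fun i _ => Finset.sum_le_sum fun j _ => h1 i j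
    have h3 : ∑ i, ∑ j, (s / (n:ℝ)^2 - B i j) = 0 := by
      simp only [Finset.sum_sub_distrib, Finset.sum_const, card_univ, Fintype.card_fin,
        nsmul_eq_mul]
      rw [← hsdef]
      have hne : ((n:ℝ)) ≠ 0 := Nat.cast_ne_zero.2 hn.ne'
      field_simp
      ring
    have hlogdiv : Real.log (s / (n:ℝ)^2) = Real.log s - 2 * Real.log n := by
      rw [Real.log_div hs.ne' (by positivity), Real.log_pow]
      push_cast; ring
    have h4 : ∑ i, ∑ j, (B i j * (Real.log (s / (n:ℝ)^2) - Real.log (B i j))) =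
        s * Real.log s - 2 * s * Real.log n - ∑ i, ∑ j, Real.log (B i j) * B i j := by
      have t : ∀ i j, B i j * (Real.log (s / (n:ℝ)^2) - Real.log (B i j)) =
          (Real.log s - 2 * Real.log n) * B i j - Real.log (B i j) * B i j := by
        intro i j; rw [hlogdiv]; ring
      simp_rw [t, Finset.sum_sub_distrib, ← Finset.mul_sum]
      rw [← hsdef]
      ring
    rw [h4, h3] at h2
    linarith
  -- combine
  have hfinal : ∑ i, ∑ j, Real.log (B i j) * (Q i j - B i j) ≤ 2 * s * Real.log n := by
    have h5 : ∑ i, ∑ j, Real.log (B i j) * (Q i j - B i j) =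
        (∑ i, ∑ j, Real.log (B i j) * Q i j) -
          ∑ i, ∑ j, Real.log (B i j) * B i j := by
      simp_rw [mul_sub, Finset.sum_sub_distrib]
    rw [h5]
    linarith
  have := mul_le_mul_of_nonneg_left hfinal hγ.le
  linarith [hident, this]

private lemma cost_perturb {n : ℕ} (C X Y : Matrix (Fin n) (Fin n) ℝ) (M : ℝ)
    (hM : ∀ i j, |C i j| ≤ M) :
    ∑ i, ∑ j, C i j * X i j ≤
      (∑ i, ∑ j, C i j * Y i j) + M * ∑ i, ∑ j, |X i j - Y i j| := by
  have key : ∀ i j, C i j * X i j ≤ C i j * Y i j + M * |X i j - Y i j| := by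
    intro i j
    have h1 : C i j * (X i j - Y i j) ≤ |C i j| * |X i j - Y i j| := by
      calc C i j * (X i j - Y i j) ≤ |C i j * (X i j - Y i j)| := le_abs_self _
        _ = |C i j| * |X i j - Y i j| := abs_mul _ _
    have h2 : |C i j| * |X i j - Y i j| ≤ M * |X i j - Y i j| :=
      mul_le_mul_of_nonneg_right (hM i j) (abs_nonneg _)
    nlinarith
  calc ∑ i, ∑ j, C i j * X i j
      ≤ ∑ i, ∑ j, (C i j * Y i j + M * |X i j - Y i j|) := by
        refine Finset.sum_le_sum fun i _ => Finset.sum_le_sum fun j _ => key i j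
    _ = (∑ i, ∑ j, C i j * Y i j) + M * ∑ i, ∑ j, |X i j - Y i j| := by
        simp [Finset.sum_add_distrib, Finset.mul_sum]

private lemma exists_rounding {n : ℕ} (a b r c : Fin n → ℝ) (P : Matrix (Fin n) (Fin n) ℝ)
    (hP0 : ∀ i j, 0 ≤ P i j) (hPr : ∀ i, ∑ j, P i j = a i) (hPc : ∀ j, ∑ i, P i j = b j)
    (hr : ∀ i, 0 < r i) (hc : ∀ j, 0 < c j)
    (hrc : ∑ i, r i = ∑ j, c j) :
    ∃ Q : Matrix (Fin n) (Fin n) ℝ, (∀ i j, 0 ≤ Q i j) ∧ (∀ i, ∑ j, Q i j = r i) ∧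
      (∀ j, ∑ i, Q i j = c j) ∧
      ∑ i, ∑ j, |P i j - Q i j| ≤ (∑ i, |r i - a i|) + 2 * ∑ j, |c j - b j| := by
  classical
  have ha0 : ∀ i, 0 ≤ a i := fun i => (hPr i) ▸ Finset.sum_nonneg fun j _ => hP0 i j
  set X : Matrix (Fin n) (Fin n) ℝ := fun i j => P i j * min 1 (r i / a i) with hXdef
  have hm0 : ∀ i, 0 ≤ min 1 (r i / a i) :=
    fun i => le_min zero_le_one (div_nonneg (hr i).le (ha0 i))
  have hX0 : ∀ i j, 0 ≤ X i j := fun i j => mul_nonneg (hP0 i j) (hm0 i)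
  have hXP : ∀ i j, X i j ≤ P i j :=
    fun i j => mul_le_of_le_one_right (hP0 i j) (min_le_left _ _)
  have hXrow : ∀ i, ∑ j, X i j = min (a i) (r i) := by
    intro i
    have h1 : ∑ j, X i j = a i * min 1 (r i / a i) := by
      rw [← Finset.sum_mul, hPr i]
    rw [h1]
    rcases (ha0 i).lt_or_eq with h | h
    · rw [mul_min_of_nonneg _ _ h.le, mul_one, mul_div_cancel₀ _ h.ne']
    · rw [← h]; simp [min_eq_left (hr i).le]
  set cX : Fin n → ℝ := fun j => ∑ i, X i j with hcXdef
  have hcX0 : ∀ j, 0 ≤ cX j := fun j => Finset.sum_nonneg fun i _ => hX0 i j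
  have hcXb : ∀ j, cX j ≤ b j := by
    intro j; rw [← hPc j]; exact Finset.sum_le_sum fun i _ => hXP i j
  set Y : Matrix (Fin n) (Fin n) ℝ := fun i j => X i j * min 1 (c j / cX j) with hYdef
  have hm0' : ∀ j, 0 ≤ min 1 (c j / cX j) :=
    fun j => le_min zero_le_one (div_nonneg (hc j).le (hcX0 j))
  have hY0 : ∀ i j, 0 ≤ Y i j := fun i j => mul_nonneg (hX0 i j) (hm0' j)
  have hYX : ∀ i j, Y i j ≤ X i j :=
    fun i j => mul_le_of_le_one_right (hX0 i j) (min_le_left _ _)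
  have hYcol : ∀ j, ∑ i, Y i j = min (cX j) (c j) := by
    intro j
    have h1 : ∑ i, Y i j = cX j * min 1 (c j / cX j) := by
      rw [← Finset.sum_mul]
    rw [h1]
    rcases (hcX0 j).lt_or_eq with h | h
    · rw [mul_min_of_nonneg _ _ h.le, mul_one, mul_div_cancel₀ _ h.ne']
    · rw [← h]; simp [min_eq_left (hc j).le]
  have hYrow_le : ∀ i, ∑ j, Y i j ≤ min (a i) (r i) := by
    intro i; rw [← hXrow i]; exact Finset.sum_le_sum fun j _ => hYX i j
  set er : Fin n → ℝ := fun i => r i - ∑ j, Y i j with herdef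
  set ec : Fin n → ℝ := fun j => c j - ∑ i, Y i j with hecdef
  have her0 : ∀ i, 0 ≤ er i := by
    intro i; have := hYrow_le i; have := min_le_right (a i) (r i)
    simp only [herdef]; linarith
  have hec0 : ∀ j, 0 ≤ ec j := by
    intro j; have h := hYcol j; have := min_le_right (cX j) (c j)
    simp only [hecdef]; linarith
  set Δ : ℝ := ∑ i, er i with hΔdef
  have hΔ0 : 0 ≤ Δ := Finset.sum_nonneg fun i _ => her0 i
  have hswap : ∑ j, ∑ i, Y i j = ∑ i, ∑ j, Y i j := Finset.sum_comm
  have hΔec : ∑ j, ec j = Δ := by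
    simp only [hecdef, herdef, hΔdef, Finset.sum_sub_distrib]
    rw [hswap, hrc]
  set Q : Matrix (Fin n) (Fin n) ℝ := fun i j => Y i j + er i * ec j / Δ with hQdef
  have hQ0 : ∀ i j, 0 ≤ Q i j := fun i j =>
    add_nonneg (hY0 i j) (div_nonneg (mul_nonneg (her0 i) (hec0 j)) hΔ0)
  have hQr : ∀ i, ∑ j, Q i j = r i := by
    intro i
    have h1 : ∑ j, Q i j = (∑ j, Y i j) + er i * (∑ j, ec j) / Δ := by
      simp only [hQdef, Finset.sum_add_distrib]
      congr 1
      rw [Finset.mul_sum, Finset.sum_div]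
    rw [h1, hΔec]
    by_cases hΔ : Δ = 0
    · have : er i = 0 := by
        have := (Finset.sum_eq_zero_iff_of_nonneg (fun i _ => her0 i)).1 hΔ i (mem_univ i)
        exact this
      simp only [herdef] at this ⊢
      rw [hΔ]; simp only [mul_zero, zero_div]
      linarith [this]
    · rw [mul_div_assoc, div_self hΔ, mul_one]
      simp only [herdef]; ring
  have hQc : ∀ j, ∑ i, Q i j = c j := by
    intro j
    have h1 : ∑ i, Q i j = (∑ i, Y i j) + (∑ i, er i) * ec j / Δ := by
      simp only [hQdef, Finset.sum_add_distrib]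
      congr 1
      rw [← Finset.sum_div, ← Finset.sum_mul]
    rw [h1, ← hΔdef]
    by_cases hΔ : Δ = 0
    · have : ec j = 0 := by
        refine (Finset.sum_eq_zero_iff_of_nonneg (fun j _ => hec0 j)).1 ?_ j (mem_univ j)
        rw [hΔec]; exact hΔ
      simp only [hecdef] at this ⊢
      rw [hΔ]; simp only [zero_div, zero_mul]
      linarith [this]
    · rw [mul_comm, mul_div_assoc, div_self hΔ, mul_one]
      simp only [hecdef]; ring
  refine ⟨Q, hQ0, hQr, hQc, ?_⟩
  -- error bound
  have habs : ∀ i j, |P i j - Q i j| ≤ (P i j - Y i j) + er i * ec j / Δ := by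
    intro i j
    have h1 : 0 ≤ P i j - Y i j := by
      have := hYX i j; have := hXP i j; linarith
    have h2 : 0 ≤ er i * ec j / Δ := div_nonneg (mul_nonneg (her0 i) (hec0 j)) hΔ0
    rw [abs_le]; constructor
    · simp only [hQdef]; linarith
    · simp only [hQdef]; linarith
  have hsum1 : ∑ i, ∑ j, |P i j - Q i j| ≤
      ((∑ i, a i) - ∑ i, ∑ j, Y i j) + Δ := by
    have hb1 : ∑ i, ∑ j, |P i j - Q i j| ≤
        (∑ i, ∑ j, (P i j - Y i j)) + ∑ i, ∑ j, er i * ec j / Δ := by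
      calc ∑ i, ∑ j, |P i j - Q i j|
          ≤ ∑ i, ∑ j, ((P i j - Y i j) + er i * ec j / Δ) :=
            Finset.sum_le_sum fun i _ => Finset.sum_le_sum fun j _ => habs i j
        _ = _ := by simp [Finset.sum_add_distrib]
    have hb2 : ∑ i, ∑ j, (P i j - Y i j) = (∑ i, a i) - ∑ i, ∑ j, Y i j := by
      simp [Finset.sum_sub_distrib, hPr]
    have hb3 : ∑ i, ∑ j, er i * ec j / Δ ≤ Δ := by
      have hrow : ∀ i, ∑ j, er i * ec j / Δ = er i * (Δ / Δ) := by
        intro i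
        simp_rw [mul_div_assoc]
        rw [← Finset.mul_sum, ← Finset.sum_div, hΔec]
      have hcorr : ∑ i, ∑ j, er i * ec j / Δ = Δ * (Δ / Δ) := by
        simp_rw [hrow]
        rw [← Finset.sum_mul]
      rw [hcorr]
      by_cases hΔ : Δ = 0
      · rw [hΔ]; simp
      · rw [div_self hΔ, mul_one]
    linarith
  -- final arithmetic
  have hterm1 : ∀ i, (r i - a i) + 2 * (a i - min (a i) (r i)) ≤ |r i - a i| := by
    intro i
    rcases le_total (a i) (r i) with h | h
    · rw [min_eq_left h, abs_of_nonneg (by linarith)]; linarith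
    · rw [min_eq_right h, abs_of_nonpos (by linarith)]; linarith
  have hterm2 : ∀ j, cX j - min (cX j) (c j) ≤ |c j - b j| := by
    intro j
    rcases le_total (cX j) (c j) with h | h
    · rw [min_eq_left h]; simp [abs_nonneg]
    · rw [min_eq_right h]
      have h2 : cX j - c j ≤ b j - c j := by linarith [hcXb j]
      have h3 : b j - c j ≤ |c j - b j| := by
        rw [abs_sub_comm]; exact le_abs_self _
      linarith
  have hXS : ∑ i, ∑ j, X i j = ∑ i, min (a i) (r i) := by
    exact Finset.sum_congr rfl fun i _ => hXrow i
  have hXScol : ∑ i, ∑ j, X i j = ∑ j, cX j := Finset.sum_comm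
  have hT : ∑ i, ∑ j, Y i j = ∑ j, min (cX j) (c j) := by
    rw [← hswap]; exact Finset.sum_congr rfl fun j _ => hYcol j
  have hΔval : Δ = (∑ i, r i) - ∑ i, ∑ j, Y i j := by
    simp [hΔdef, herdef, Finset.sum_sub_distrib]
  have e1 : ((∑ i, r i) - ∑ i, a i) + 2 * ((∑ i, a i) - ∑ i, ∑ j, X i j)
      ≤ ∑ i, |r i - a i| := by
    rw [hXS]
    have s1 : ∑ i, (r i - a i) = (∑ i, r i) - ∑ i, a i := Finset.sum_sub_distrib _ _
    have s2 : ∑ i, (a i - min (a i) (r i)) = (∑ i, a i) - ∑ i, min (a i) (r i) :=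
      Finset.sum_sub_distrib _ _
    have s3 : ∑ i, ((r i - a i) + 2 * (a i - min (a i) (r i))) ≤ ∑ i, |r i - a i| :=
      Finset.sum_le_sum fun i _ => hterm1 i
    have s4 : ∑ i, ((r i - a i) + 2 * (a i - min (a i) (r i)))
        = (∑ i, (r i - a i)) + 2 * ∑ i, (a i - min (a i) (r i)) := by
      rw [Finset.sum_add_distrib, Finset.mul_sum]
    linarith
  have e2 : (∑ i, ∑ j, X i j) - (∑ i, ∑ j, Y i j) ≤ ∑ j, |c j - b j| := by
    rw [hXScol, hT]
    calc (∑ j, cX j) - ∑ j, min (cX j) (c j)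
        = ∑ j, (cX j - min (cX j) (c j)) := by rw [Finset.sum_sub_distrib]
      _ ≤ ∑ j, |c j - b j| := Finset.sum_le_sum fun j _ => hterm2 j
  have := hsum1
  rw [hΔval] at this
  linarith


theorem rounded_plan_cost_bound_general {n : ℕ} (a b : Fin n → ℝ)
    (C : Matrix (Fin n) (Fin n) ℝ) (γ : ℝ) (hγ : 0 < γ)
    (ha0 : ∀ i, 0 ≤ a i) (hb0 : ∀ j, 0 ≤ b j)
    (ha1 : ∑ i, a i = 1) (hb1 : ∑ j, b j = 1)
    (hC : ∀ i j, 0 ≤ C i j)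
    (u v : Fin n → ℝ) (hu : ∀ i, 0 < u i) (hv : ∀ j, 0 < v j)
    (B : Matrix (Fin n) (Fin n) ℝ)
    (hB : ∀ i j, B i j = u i * Real.exp (-C i j / γ) * v j)
    (E : ℝ)
    (hE : E = (∑ i, |(∑ j, B i j) - a i|) + (∑ j, |(∑ i, B i j) - b j|))
    (Bhat : Matrix (Fin n) (Fin n) ℝ)
    (hBhat0 : ∀ i j, 0 ≤ Bhat i j)
    (hBhatr : ∀ i, ∑ j, Bhat i j = a i)
    (hBhatc : ∀ j, ∑ i, Bhat i j = b j)
    (hclose : ∑ i, ∑ j, |B i j - Bhat i j| ≤ 2 * E) :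
    ∀ P : Matrix (Fin n) (Fin n) ℝ,
      (∀ i j, 0 ≤ P i j) → (∀ i, ∑ j, P i j = a i) → (∀ j, ∑ i, P i j = b j) →
      ∑ i, ∑ j, C i j * Bhat i j ≤
        (∑ i, ∑ j, C i j * P i j) + (2 + E) * γ * Real.log n +
          4 * E * (⨆ i, ⨆ j, |C i j|) := by
  intro P hP0 hPr hPc
  have hn : 0 < n := by
    rcases Nat.eq_zero_or_pos n with h | h
    · subst h; simp at ha1
    · exact h
  have hBpos : ∀ i j, 0 < B i j := fun i j => by
    rw [hB]; exact mul_pos (mul_pos (hu i) (Real.exp_pos _)) (hv j)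
  have huniv : (Finset.univ : Finset (Fin n)).Nonempty := ⟨⟨0, hn⟩, Finset.mem_univ _⟩
  have hrpos : ∀ i, 0 < ∑ j, B i j :=
    fun i => Finset.sum_pos (fun j _ => hBpos i j) huniv
  have hcpos : ∀ j, 0 < ∑ i, B i j :=
    fun j => Finset.sum_pos (fun i _ => hBpos i j) huniv
  have hrc : ∑ i, ∑ j, B i j = ∑ j, ∑ i, B i j := Finset.sum_comm
  obtain ⟨Q, hQ0, hQr, hQc, hQerr⟩ :=
    exists_rounding a b (fun i => ∑ j, B i j) (fun j => ∑ i, B i j) P hP0 hPr hPc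
      hrpos hcpos hrc
  -- names for the two error parts
  have hEr0 : 0 ≤ ∑ i, |(∑ j, B i j) - a i| :=
    Finset.sum_nonneg fun i _ => abs_nonneg _
  have hEc0 : 0 ≤ ∑ j, |(∑ i, B i j) - b j| :=
    Finset.sum_nonneg fun j _ => abs_nonneg _
  have hE0 : 0 ≤ E := by rw [hE]; linarith
  have hQerr2 : ∑ i, ∑ j, |P i j - Q i j| ≤ 2 * E := by
    have : (∑ i, |(∑ j, B i j) - a i|) + 2 * ∑ j, |(∑ i, B i j) - b j| ≤ 2 * E := by
      rw [hE]; linarith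
    linarith
  -- sup norm of C
  have hM : ∀ i j, |C i j| ≤ ⨆ i, ⨆ j, |C i j| := by
    intro i j
    have h1 : |C i j| ≤ ⨆ j, |C i j| :=
      le_ciSup (f := fun j => |C i j|) (Finite.bddAbove_range _) j
    have h2 : (⨆ j, |C i j|) ≤ ⨆ i, ⨆ j, |C i j| :=
      le_ciSup (f := fun i => ⨆ j, |C i j|) (Finite.bddAbove_range _) i
    linarith
  have hM0 : 0 ≤ ⨆ i, ⨆ j, |C i j| :=
    le_trans (abs_nonneg _) (hM ⟨0, hn⟩ ⟨0, hn⟩)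
  -- entropic bound
  have hent := entropic_bound hn C γ hγ u v hu hv B hB Q hQ0 hQr hQc
  -- total mass bound : 2 * s ≤ 2 + E
  have hsE : 2 * (∑ i, ∑ j, B i j) ≤ 2 + E := by
    have h1 : (∑ i, ∑ j, B i j) - 1 = ∑ i, ((∑ j, B i j) - a i) := by
      rw [Finset.sum_sub_distrib, ha1]
    have h2 : ∑ i, ((∑ j, B i j) - a i) ≤ ∑ i, |(∑ j, B i j) - a i| :=
      Finset.sum_le_sum fun i _ => le_abs_self _
    have h3 : (∑ i, ∑ j, B i j) - 1 = ∑ j, ((∑ i, B i j) - b j) := by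
      rw [Finset.sum_sub_distrib, hb1, hrc]
    have h4 : ∑ j, ((∑ i, B i j) - b j) ≤ ∑ j, |(∑ i, B i j) - b j| :=
      Finset.sum_le_sum fun j _ => le_abs_self _
    rw [hE]; linarith
  have hlogn : 0 ≤ Real.log n := Real.log_nonneg (by exact_mod_cast hn)
  -- cost perturbations
  have hpert1 := cost_perturb C Bhat B (⨆ i, ⨆ j, |C i j|) hM
  have habs1 : ∑ i, ∑ j, |Bhat i j - B i j| ≤ 2 * E := by
    have : ∑ i, ∑ j, |Bhat i j - B i j| = ∑ i, ∑ j, |B i j - Bhat i j| := by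
      simp_rw [abs_sub_comm]
    rw [this]; exact hclose
  have hpert2 := cost_perturb C Q P (⨆ i, ⨆ j, |C i j|) hM
  have habs2 : ∑ i, ∑ j, |Q i j - P i j| ≤ 2 * E := by
    have : ∑ i, ∑ j, |Q i j - P i j| = ∑ i, ∑ j, |P i j - Q i j| := by
      simp_rw [abs_sub_comm]
    rw [this]; exact hQerr2
  have hmul1 : (⨆ i, ⨆ j, |C i j|) * (∑ i, ∑ j, |Bhat i j - B i j|) ≤
      (⨆ i, ⨆ j, |C i j|) * (2 * E) := mul_le_mul_of_nonneg_left habs1 hM0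
  have hmul2 : (⨆ i, ⨆ j, |C i j|) * (∑ i, ∑ j, |Q i j - P i j|) ≤
      (⨆ i, ⨆ j, |C i j|) * (2 * E) := mul_le_mul_of_nonneg_left habs2 hM0
  have hmul3 : γ * (2 * (∑ i, ∑ j, B i j) * Real.log n) ≤ (2 + E) * γ * Real.log n := by
    have h1 : 2 * (∑ i, ∑ j, B i j) * Real.log n ≤ (2 + E) * Real.log n :=
      mul_le_mul_of_nonneg_right hsE hlogn
    calc γ * (2 * (∑ i, ∑ j, B i j) * Real.log n) ≤ γ * ((2 + E) * Real.log n) :=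
          mul_le_mul_of_nonneg_left h1 hγ.le
      _ = (2 + E) * γ * Real.log n := by ring
  nlinarith [hpert1, hpert2, hent, hmul1, hmul2, hmul3]
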